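/- arXiv:2311.11266 — 2 statements merged into one kernel-verified Lean document; each statement's English description precedes it below -/
import Mathlib

section
/- Let A be a finitely generated abelian group with torsion subgroup T of cardinality t, and let h : A → ℝ≥0 be a quadratic form vanishing exactly on T, inducing a norm on the free quotient A/T ≅ ℤʳ viewed inside ℝʳ. Suppose h(P) ≥ c₁ > 0 for all P ∈ A \ T. Then for any X > 0, the number of P ∈ A with h(P) ≤ X is at most t · (1 + 2·sqrt(X/c₁))ʳ. -/
private theorem aux_finrank {A : Type*} [AddCommGroup A] (n : ℕ) (G : Type) [AddCommGroup G]
    [Finite G] (e : A ≃+ (Fin n → ℤ) × G) : Module.finrank ℤ A = n := by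
  have l : A ≃ₗ[ℤ] (Fin n → ℤ) × G := e.toIntLinearEquiv
  have h := l.lift_rank_eq
  have hp : Module.rank ℤ ((Fin n → ℤ) × G) = n := by
    have hfst : Function.Surjective (LinearMap.fst ℤ (Fin n → ℤ) G) := fun v => ⟨(v, 0), rfl⟩
    have hker : LinearMap.ker (LinearMap.fst ℤ (Fin n → ℤ) G) ≤ Submodule.torsion ℤ _ := by
      rintro ⟨x1, x2⟩ hx
      rw [LinearMap.mem_ker] at hx
      simp only [LinearMap.fst_apply] at hx
      subst hx
      refine ⟨⟨(addOrderOf x2 : ℤ), ?_⟩, ?_⟩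
      · simp only [mem_nonZeroDivisors_iff_ne_zero]
        exact_mod_cast (isOfFinAddOrder_of_finite x2).addOrderOf_pos.ne'
      · have : (addOrderOf x2 : ℤ) • x2 = 0 := by
          rw [natCast_zsmul]; exact addOrderOf_nsmul_eq_zero x2
        simp [Prod.smul_mk, this, Prod.ext_iff]
    have h1 := rank_quotient_eq_of_le_torsion hker
    have h2 := (LinearMap.quotKerEquivOfSurjective _ hfst).rank_eq
    rw [h2] at h1
    rw [← h1, rank_fun', Fintype.card_fin]
  rw [hp] at h
  have hA : Module.rank ℤ A = n := by simpa using h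
  exact Module.finrank_eq_of_rank_eq hA

/-- Let `A` be a finitely generated abelian group of rank `r` with torsion subgroup of size
`t`, and `h : A → ℝ` a nonnegative function, invariant under translation by torsion
elements, with `h(n•x) = n²·h(x)` and `√∘h` subadditive (so that `√∘h` induces a norm on
the free quotient), vanishing exactly on torsion, and with `h(P) ≥ c₁ > 0` for all
non-torsion `P`. Then for any `X > 0`, `#{P ∈ A : h(P) ≤ X} ≤ t·(1 + 2√(X/c₁))^r`. -/
theorem stmt_6 {A : Type*} [AddCommGroup A] [AddGroup.FG A]
    (h : A → ℝ) (r t : ℕ)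
    (hr : r = Module.finrank ℤ A)
    (ht : t = Nat.card (AddCommGroup.torsion A))
    (hnonneg : ∀ x, 0 ≤ h x)
    (hinv : ∀ (x : A) (T : A), IsOfFinAddOrder T → h (x + T) = h x)
    (hquad : ∀ (n : ℤ) (x : A), h (n • x) = (n : ℝ) ^ 2 * h x)
    (htri : ∀ x y : A, Real.sqrt (h (x + y)) ≤ Real.sqrt (h x) + Real.sqrt (h y))
    (hvanish : ∀ x : A, h x = 0 ↔ IsOfFinAddOrder x)
    (c₁ : ℝ) (hc₁ : 0 < c₁)
    (hlow : ∀ P : A, ¬ IsOfFinAddOrder P → c₁ ≤ h P)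
    (X : ℝ) (hX : 0 < X) :
    (Nat.card {P : A // h P ≤ X} : ℝ) ≤ t * (1 + 2 * Real.sqrt (X / c₁)) ^ r := by
  classical
  obtain ⟨n, ι, fι, p, hpp, ee, ⟨e0⟩⟩ := AddCommGroup.equiv_free_prod_directSum_zmod A
  set G := DirectSum ι (fun i => ZMod (p i ^ ee i)) with hG
  haveI : ∀ i, NeZero (p i ^ ee i) := fun i => ⟨pow_ne_zero _ (hpp i).pos.ne'⟩
  haveI : Finite G := Finite.of_equiv _ DFinsupp.equivFunOnFintype.symm
  have e : A ≃+ (Fin n → ℤ) × G :=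
    e0.trans ((Finsupp.addEquivFunOnFinite).prodCongr (AddEquiv.refl G))
  have hnr : n = r := by rw [hr, aux_finrank n G e]
  subst hnr
  -- characterization of torsion
  have horder : ∀ x : A, IsOfFinAddOrder x ↔ (e x).1 = 0 := by
    intro x
    constructor
    · intro hx
      obtain ⟨k, hk, hkx⟩ := isOfFinAddOrder_iff_nsmul_eq_zero.mp hx
      have h1 : k • (e x) = 0 := by rw [← map_nsmul, hkx, map_zero]
      have h2 : k • (e x).1 = 0 := by
        have := congrArg Prod.fst h1
        simpa using this
      funext i
      have h3 := congrFun h2 i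
      rw [Pi.smul_apply, nsmul_eq_mul] at h3
      have hk' : (k : ℤ) ≠ 0 := by exact_mod_cast hk.ne'
      have := mul_eq_zero.mp h3
      simpa [hk', hk.ne'] using this
    · intro hx
      obtain ⟨k, hk, hkx⟩ :=
        isOfFinAddOrder_iff_nsmul_eq_zero.mp (isOfFinAddOrder_of_finite (e x).2)
      refine isOfFinAddOrder_iff_nsmul_eq_zero.mpr ⟨k, hk, e.injective ?_⟩
      rw [map_nsmul, map_zero]
      refine Prod.ext ?_ ?_
      · show k • (e x).1 = ((0 : (Fin n → ℤ) × G)).1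
        rw [hx, smul_zero]; rfl
      · exact hkx
  -- torsion subgroup is finite with cardinality t
  have hbij : Function.Bijective (fun x : AddCommGroup.torsion A => (e x.1).2) := by
    constructor
    · rintro ⟨x, hx⟩ ⟨y, hy⟩ hxy
      simp only at hxy
      have h1 : (e x).1 = 0 := (horder x).mp hx
      have h2 : (e y).1 = 0 := (horder y).mp hy
      exact Subtype.ext (e.injective (Prod.ext (h1.trans h2.symm) hxy))
    · intro g
      refine ⟨⟨e.symm (0, g), ?_⟩, ?_⟩
      · exact (horder _).mpr (by simp)
      · simp
  haveI hfinT : Finite (AddCommGroup.torsion A) := Finite.of_injective _ hbij.1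
  have h0 : h (0 : A) = 0 := by
    have := hquad 0 0
    simpa using this
  set a : ℝ := 2 * Real.sqrt (X / c₁) with ha
  have ha0 : 0 ≤ a := by positivity
  set m : ℕ := ⌊a⌋₊ + 1 with hm
  have hma : (m : ℝ) ≤ 1 + a := by
    rw [hm]; push_cast; linarith [Nat.floor_le ha0]
  have ham : a < m := by rw [hm]; push_cast; exact Nat.lt_floor_add_one a
  haveI : NeZero m := ⟨Nat.succ_ne_zero _⟩
  -- fiber lemma
  have fiber : ∀ P Q : A, h P ≤ X → h Q ≤ X →
      (∀ i, (((e P).1 i : ZMod m)) = ((e Q).1 i : ZMod m)) → IsOfFinAddOrder (P - Q) := by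
    intro P Q hP hQ hPQ
    have hneg : h (-Q) = h Q := by
      have := hquad (-1) Q
      simpa using this
    have hsq : Real.sqrt (h (P - Q)) ≤ 2 * Real.sqrt X := by
      rw [sub_eq_add_neg]
      have t1 := htri P (-Q)
      have t2 : Real.sqrt (h P) ≤ Real.sqrt X := Real.sqrt_le_sqrt hP
      have t3 : Real.sqrt (h (-Q)) ≤ Real.sqrt X := Real.sqrt_le_sqrt (hneg.le.trans hQ)
      linarith
    have h4X : h (P - Q) ≤ 4 * X := by
      have h1 : h (P - Q) = Real.sqrt (h (P - Q)) ^ 2 := (Real.sq_sqrt (hnonneg _)).symm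
      have h2 : (2 * Real.sqrt X) ^ 2 = 4 * X := by
        rw [mul_pow, Real.sq_sqrt hX.le]; ring
      rw [h1, ← h2]
      exact pow_le_pow_left₀ (Real.sqrt_nonneg _) hsq 2
    have hdvd : ∀ i, (m : ℤ) ∣ (e (P - Q)).1 i := by
      intro i
      rw [← ZMod.intCast_zmod_eq_zero_iff_dvd]
      have heq : (e (P - Q)).1 i = (e P).1 i - (e Q).1 i := by
        rw [map_sub]; rfl
      rw [heq]
      push_cast
      rw [sub_eq_zero]
      exact hPQ i
    set w : Fin n → ℤ := fun i => (e (P - Q)).1 i / m with hw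
    have hmw : (m : ℤ) • w = (e (P - Q)).1 := by
      funext i
      simp only [Pi.smul_apply, smul_eq_mul, hw]
      exact Int.mul_ediv_cancel' (hdvd i)
    set x : A := e.symm (w, 0) with hx
    set τ : A := e.symm (0, (e (P - Q)).2) with hτ
    have hdecomp : (m : ℤ) • x + τ = P - Q := by
      apply e.injective
      rw [map_add, map_zsmul, hx, hτ, e.apply_symm_apply, e.apply_symm_apply]
      refine Prod.ext ?_ ?_
      · show (m : ℤ) • w + 0 = (e (P - Q)).1
        rw [add_zero, hmw]
      · show (m : ℤ) • (0 : G) + (e (P - Q)).2 = (e (P - Q)).2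
        rw [smul_zero, zero_add]
    have hτtor : IsOfFinAddOrder τ := (horder τ).mpr (by rw [hτ]; simp)
    have hhval : h (P - Q) = (m : ℝ) ^ 2 * h x := by
      rw [← hdecomp, hinv _ _ hτtor, hquad]
      push_cast
      ring
    by_contra hcon
    have hxnt : ¬ IsOfFinAddOrder x := by
      intro hxt
      have : h x = 0 := (hvanish x).mpr hxt
      rw [this, mul_zero] at hhval
      exact hcon ((hvanish _).mp hhval)
    have hc : c₁ ≤ h x := hlow x hxnt
    have hge : (m : ℝ) ^ 2 * c₁ ≤ 4 * X := by
      calc (m : ℝ) ^ 2 * c₁ ≤ (m : ℝ) ^ 2 * h x := by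
            apply mul_le_mul_of_nonneg_left hc (by positivity)
        _ = h (P - Q) := hhval.symm
        _ ≤ 4 * X := h4X
    have hsXc : Real.sqrt (X / c₁) ^ 2 = X / c₁ := Real.sq_sqrt (by positivity)
    have h1 : a ^ 2 < (m : ℝ) ^ 2 := by nlinarith
    have h2 : a ^ 2 = 4 * (X / c₁) := by rw [ha]; rw [mul_pow, hsXc]; ring
    have h3 : 4 * (X / c₁) * c₁ = 4 * X := by field_simp
    nlinarith
  -- the injection
  set S := {P : A // h P ≤ X} with hS
  haveI : Nonempty S := ⟨⟨0, by rw [h0]; exact hX.le⟩⟩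
  set φ : S → (Fin n → ZMod m) := fun P i => (((e P.1).1 i : ZMod m)) with hφ
  set σ : S → S := fun P => Function.invFun φ (φ P) with hσdef
  have hσ : ∀ P, φ (σ P) = φ P := fun P => Function.invFun_eq ⟨P, rfl⟩
  have key : ∀ P : S, (P.1 - (σ P).1) ∈ AddCommGroup.torsion A := by
    intro P
    exact fiber P.1 (σ P).1 P.2 (σ P).2 fun i => (congrFun (hσ P) i).symm
  set ψ : S → (Fin n → ZMod m) × (AddCommGroup.torsion A) :=
    fun P => (φ P, ⟨P.1 - (σ P).1, key P⟩) with hψ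
  have hinj : Function.Injective ψ := by
    intro P Q hPQ
    have h1 : φ P = φ Q := congrArg Prod.fst hPQ
    have h2 : P.1 - (σ P).1 = Q.1 - (σ Q).1 := Subtype.ext_iff.mp (congrArg Prod.snd hPQ)
    have h3 : σ P = σ Q := by rw [hσdef]; simp only [h1]
    rw [h3] at h2
    exact Subtype.ext (sub_left_inj.mp h2)
  have hcard : Nat.card S ≤ Nat.card ((Fin n → ZMod m) × (AddCommGroup.torsion A)) :=
    Nat.card_le_card_of_injective ψ hinj
  have hcard2 : Nat.card ((Fin n → ZMod m) × (AddCommGroup.torsion A)) = m ^ n * t := by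
    rw [Nat.card_prod, Nat.card_fun, ← ht, Nat.card_eq_fintype_card (α := ZMod m), ZMod.card,
      Nat.card_eq_fintype_card (α := Fin n), Fintype.card_fin]
  rw [hcard2] at hcard
  calc (Nat.card S : ℝ) ≤ (m : ℝ) ^ n * t := by exact_mod_cast hcard
    _ ≤ (1 + a) ^ n * t := by
        apply mul_le_mul_of_nonneg_right (pow_le_pow_left₀ (by positivity) hma n) (by positivity)
    _ = t * (1 + 2 * Real.sqrt (X / c₁)) ^ n := by rw [ha, mul_comm]
end

section
/- If p(n) denotes the product of the first n primes (the primorial), then p(n) ≥ nⁿ for all integers n ≥ 13. -/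
attribute [local instance 2000] Nat.decidablePrime

private lemma nth_prime_of_count {n v : ℕ} (hv : Nat.Prime v)
    (hc : Nat.count Nat.Prime v = n) : Nat.nth Nat.Prime n = v := by
  rw [← hc]; exact Nat.nth_count hv

set_option maxRecDepth 100000 in
private lemma np13 : Nat.nth Nat.Prime 13 = 43 :=
  nth_prime_of_count (by norm_num) (by decide)

set_option maxRecDepth 100000 in
private lemma np14 : Nat.nth Nat.Prime 14 = 47 :=
  nth_prime_of_count (by norm_num) (by decide)

set_option maxRecDepth 100000 in
private lemma np16 : Nat.nth Nat.Prime 16 = 59 :=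
  nth_prime_of_count (by norm_num) (by decide)

set_option maxRecDepth 100000 in
private lemma np21 : Nat.nth Nat.Prime 21 = 79 :=
  nth_prime_of_count (by norm_num) (by decide)

set_option maxRecDepth 100000 in
private lemma np28 : Nat.nth Nat.Prime 28 = 109 :=
  nth_prime_of_count (by norm_num) (by decide)

set_option maxRecDepth 100000 in
private lemma np40 : Nat.nth Nat.Prime 40 = 179 :=
  nth_prime_of_count (by norm_num) (by decide)

set_option maxRecDepth 100000 in
private lemma np69 : Nat.nth Nat.Prime 69 = 349 :=
  nth_prime_of_count (by norm_num) (by decide)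

set_option maxRecDepth 100000 in
private lemma small_nth :
    Nat.nth Nat.Prime 0 = 2 ∧ Nat.nth Nat.Prime 1 = 3 ∧ Nat.nth Nat.Prime 2 = 5 ∧
    Nat.nth Nat.Prime 3 = 7 ∧ Nat.nth Nat.Prime 4 = 11 ∧ Nat.nth Nat.Prime 5 = 13 ∧
    Nat.nth Nat.Prime 6 = 17 ∧ Nat.nth Nat.Prime 7 = 19 ∧ Nat.nth Nat.Prime 8 = 23 ∧
    Nat.nth Nat.Prime 9 = 29 ∧ Nat.nth Nat.Prime 10 = 31 ∧ Nat.nth Nat.Prime 11 = 37 ∧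
    Nat.nth Nat.Prime 12 = 41 :=
  ⟨nth_prime_of_count (by norm_num) (by decide), nth_prime_of_count (by norm_num) (by decide),
   nth_prime_of_count (by norm_num) (by decide), nth_prime_of_count (by norm_num) (by decide),
   nth_prime_of_count (by norm_num) (by decide), nth_prime_of_count (by norm_num) (by decide),
   nth_prime_of_count (by norm_num) (by decide), nth_prime_of_count (by norm_num) (by decide),
   nth_prime_of_count (by norm_num) (by decide), nth_prime_of_count (by norm_num) (by decide),
   nth_prime_of_count (by norm_num) (by decide), nth_prime_of_count (by norm_num) (by decide),
   nth_prime_of_count (by norm_num) (by decide)⟩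

/-- The (k+1)-st prime is at least `3(k+1)` for `k ≥ 13`. -/
private lemma nth_prime_lb (k : ℕ) (hk : 13 ≤ k) : 3 * (k + 1) ≤ Nat.nth Nat.Prime k := by
  set P := Nat.nth Nat.Prime k with hP
  have key : ∀ a v : ℕ, Nat.nth Nat.Prime a = v → a ≤ k → v + (k - a) ≤ P := by
    intro a v hv ha
    have h := (Nat.nth_strictMono Nat.infinite_setOf_prime).add_le_nat (k - a) a
    rw [Nat.sub_add_cancel ha, hv] at h
    have hPk : Nat.nth (fun p => Nat.Prime p) k = P := rfl
    omega
  rcases Nat.lt_or_ge k 14 with h | h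
  · have := key 13 43 np13 (by omega); omega
  rcases Nat.lt_or_ge k 16 with h' | h'
  · have := key 14 47 np14 (by omega); omega
  rcases Nat.lt_or_ge k 21 with h2 | h2
  · have := key 16 59 np16 (by omega); omega
  rcases Nat.lt_or_ge k 28 with h3 | h3
  · have := key 21 79 np21 (by omega); omega
  rcases Nat.lt_or_ge k 40 with h4 | h4
  · have := key 28 109 np28 (by omega); omega
  rcases Nat.lt_or_ge k 69 with h5 | h5
  · have := key 40 179 np40 (by omega); omega
  rcases Nat.lt_or_ge k 91 with h6 | h6
  · have := key 69 349 np69 (by omega); omega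
  -- large case: counting argument
  by_contra hcon
  push_neg at hcon
  have hπ : Nat.primeCounting' P = k := Nat.primeCounting'_nth_eq k
  have hmono : Nat.primeCounting' P ≤ Nat.primeCounting' (31 + (3 * k - 28)) := by
    apply Nat.monotone_primeCounting'
    omega
  have hadd : Nat.primeCounting' (31 + (3 * k - 28)) ≤
      Nat.primeCounting' 31 + Nat.totient 30 * ((3 * k - 28) / 30 + 1) :=
    Nat.primeCounting'_add_le (by norm_num) (by norm_num) _
  have h31 : Nat.primeCounting' 31 = 10 := by decide
  have htot : Nat.totient 30 = 8 := by decide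
  rw [h31, htot] at hadd
  omega

/-- `(n+1)^n ≤ 3 * n^n` for `n ≥ 1` (since `(1 + 1/n)^n < e < 3`). -/
private lemma succ_pow_le (n : ℕ) (hn : 1 ≤ n) : (n + 1) ^ n ≤ 3 * n ^ n := by
  have h0 : (0 : ℝ) < (n : ℝ) := by exact_mod_cast hn
  have h1 : ((n : ℝ) + 1) ≤ (n : ℝ) * Real.exp (1 / n) := by
    have he := Real.add_one_le_exp (1 / (n : ℝ))
    have h2 : (n : ℝ) * (1 / n + 1) ≤ (n : ℝ) * Real.exp (1 / n) :=
      mul_le_mul_of_nonneg_left he h0.le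
    calc ((n : ℝ) + 1) = (n : ℝ) * (1 / n + 1) := by field_simp; ring
      _ ≤ _ := h2
  have h3 : ((n : ℝ) + 1) ^ n ≤ ((n : ℝ) * Real.exp (1 / n)) ^ n :=
    pow_le_pow_left₀ (by positivity) h1 n
  have h4 : ((n : ℝ) * Real.exp (1 / n)) ^ n = (n : ℝ) ^ n * Real.exp 1 := by
    rw [mul_pow, ← Real.exp_nat_mul]
    congr 2
    field_simp
  have h5 : Real.exp 1 ≤ 3 := le_of_lt (lt_trans Real.exp_one_lt_d9 (by norm_num))
  have hfin : ((n : ℝ) + 1) ^ n ≤ 3 * (n : ℝ) ^ n := by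
    have hnn : (0 : ℝ) ≤ (n : ℝ) ^ n := by positivity
    nlinarith
  exact_mod_cast hfin

/-- If `p(n)` is the product of the first `n` primes, then `p(n) ≥ n^n` for all `n ≥ 13`. -/
theorem stmt_16 (n : ℕ) (hn : 13 ≤ n) :
    n ^ n ≤ ∏ i ∈ Finset.range n, Nat.nth Nat.Prime i := by
  induction n, hn using Nat.le_induction with
  | base =>
    obtain ⟨e0, e1, e2, e3, e4, e5, e6, e7, e8, e9, e10, e11, e12⟩ := small_nth
    norm_num [Finset.prod_range_succ, e0, e1, e2, e3, e4, e5, e6, e7, e8, e9, e10, e11, e12]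
  | succ n hn ih =>
    have hp := nth_prime_lb n hn
    have hA := succ_pow_le n (by omega)
    calc (n + 1) ^ (n + 1) = (n + 1) ^ n * (n + 1) := pow_succ _ _
      _ ≤ 3 * n ^ n * (n + 1) := Nat.mul_le_mul_right _ hA
      _ = n ^ n * (3 * (n + 1)) := by ring
      _ ≤ (∏ i ∈ Finset.range n, Nat.nth Nat.Prime i) * Nat.nth Nat.Prime n :=
          Nat.mul_le_mul ih hp
      _ = ∏ i ∈ Finset.range (n + 1), Nat.nth Nat.Prime i := (Finset.prod_range_succ _ _).symm
end
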